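/- Let G be a very well-covered graph with 2n vertices satisfying (∗), (∗∗), and conditions (i) and (ii). Then the independence complex of G is vertex decomposable. -/
import Mathlib


open Relation

/-- `C` is a vertex cover of `G`. -/
def IsVC {V : Type*} (G : SimpleGraph V) (C : Set V) : Prop :=
  ∀ ⦃u v : V⦄, G.Adj u v → u ∈ C ∨ v ∈ C

/-- `C` is a minimal vertex cover of `G`. -/
def IsMinVC {V : Type*} (G : SimpleGraph V) (C : Set V) : Prop :=
  IsVC G C ∧ ∀ D : Set V, IsVC G D → D ⊆ C → D = C

/-- `S` is an independent set of `G`. -/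
def IsIndep {V : Type*} (G : SimpleGraph V) (S : Set V) : Prop :=
  ∀ u ∈ S, ∀ v ∈ S, ¬ G.Adj u v

/-- `S` is a maximal independent set of `G`. -/
def IsMaxIndep {V : Type*} (G : SimpleGraph V) (S : Set V) : Prop :=
  IsIndep G S ∧ ∀ T : Set V, IsIndep G T → S ⊆ T → T = S

/-- `G` has no isolated vertices. -/
def NoIsolated {V : Type*} (G : SimpleGraph V) : Prop := ∀ v, ∃ w, G.Adj v w

/-- The vertex set `{x_1,...,x_n} ∪ {y_1,...,y_n}`: `xv i = Sum.inl i`, `yv i = Sum.inr i`. -/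
abbrev Vtx (n : ℕ) := Fin n ⊕ Fin n

def xv {n : ℕ} (i : Fin n) : Vtx n := Sum.inl i
def yv {n : ℕ} (i : Fin n) : Vtx n := Sum.inr i

/-- Condition (∗): X is a minimal vertex cover, Y is a maximal independent set,
and `x_i y_i` is an edge for every `i`. -/
def StarCond {n : ℕ} (G : SimpleGraph (Vtx n)) : Prop :=
  IsMinVC G (Set.range xv) ∧ IsMaxIndep G (Set.range yv) ∧ ∀ i, G.Adj (xv i) (yv i)

/-- Condition (∗∗): `x_i y_j ∈ E(G)` implies `i ≤ j`. -/
def StarStarCond {n : ℕ} (G : SimpleGraph (Vtx n)) : Prop :=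
  ∀ i j : Fin n, G.Adj (xv i) (yv j) → i ≤ j

/-- Condition (i): for distinct `i,j,k` and `z_i ∈ {x_i,y_i}`, if `z_i x_j` and `y_j x_k`
are edges then so is `z_i x_k`. -/
def CondI {n : ℕ} (G : SimpleGraph (Vtx n)) : Prop :=
  ∀ i j k : Fin n, i ≠ j → j ≠ k → i ≠ k →
    ∀ z ∈ ({xv i, yv i} : Set (Vtx n)),
      G.Adj z (xv j) → G.Adj (yv j) (xv k) → G.Adj z (xv k)

/-- Condition (ii): `x_i y_j ∈ E(G)` implies `x_i x_j ∉ E(G)`. -/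
def CondII {n : ℕ} (G : SimpleGraph (Vtx n)) : Prop :=
  ∀ i j : Fin n, G.Adj (xv i) (yv j) → ¬ G.Adj (xv i) (xv j)

/-- The minimum vertex cover size of `G` (the height of the edge ideal) is at least `n`. -/
def HeightN {n : ℕ} (G : SimpleGraph (Vtx n)) : Prop :=
  ∀ C : Finset (Vtx n), IsVC G ↑C → n ≤ C.card

/-- Directed edge `i → j` of the semidirected graph `𝔡_G`. -/
def dirEdge {n : ℕ} (G : SimpleGraph (Vtx n)) (i j : Fin n) : Prop :=
  i ≠ j ∧ G.Adj (xv i) (yv j)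

/-- Undirected edge `ij` of the semidirected graph `𝔡_G`. -/
def undirEdge {n : ℕ} (G : SimpleGraph (Vtx n)) (i j : Fin n) : Prop :=
  G.Adj (xv i) (xv j)
/-- The link of the vertex `x` in the simplicial complex `Δ`. -/
def linkC {V : Type*} [DecidableEq V] (Δ : Set (Finset V)) (x : V) : Set (Finset V) :=
  {s | x ∉ s ∧ insert x s ∈ Δ}

/-- The deletion of the vertex `x` from the simplicial complex `Δ`. -/
def delC {V : Type*} (Δ : Set (Finset V)) (x : V) : Set (Finset V) :=
  {s | x ∉ s ∧ s ∈ Δ}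

/-- `s` is a facet (maximal face) of `Δ`. -/
def IsFacet {V : Type*} (Δ : Set (Finset V)) (s : Finset V) : Prop :=
  s ∈ Δ ∧ ∀ t ∈ Δ, s ⊆ t → s = t

/-- Vertex decomposability of a simplicial complex: `Δ` is empty, or a simplex,
or it has a shedding vertex `x` such that the link and deletion of `x` are vertex
decomposable and every facet of the deletion is a facet of `Δ`. -/
inductive IsVD {V : Type*} [DecidableEq V] : Set (Finset V) → Prop
  | empty : IsVD ∅
  | simplex (s : Finset V) : IsVD {t | t ⊆ s}
  | step (Δ : Set (Finset V)) (x : V) : IsVD (linkC Δ x) → IsVD (delC Δ x) →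
      (∀ s, IsFacet (delC Δ x) s → IsFacet Δ s) → IsVD Δ

/-- The independence complex of a graph: faces are the independent sets. -/
def indComplex {V : Type*} (G : SimpleGraph V) : Set (Finset V) :=
  {s | ∀ u ∈ s, ∀ v ∈ s, ¬ G.Adj u v}

/-- The independence complex of the induced subgraph `G \ S`. -/
def indComplexAvoid {V : Type*} (G : SimpleGraph V) (S : Set V) : Set (Finset V) :=
  {s | (∀ v ∈ s, v ∉ S) ∧ s ∈ indComplex G}

namespace VDAux

variable {n : ℕ} (G : SimpleGraph (Vtx n))

/-- Invariant on the set of deleted vertices: whenever `y_k` is deleted but `x_k`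
is not, the vertex `x_k` has no surviving neighbor. -/
def InvS (S : Set (Vtx n)) : Prop :=
  ∀ k : Fin n, yv k ∈ S → xv k ∉ S → ∀ w, w ∉ S → ¬ G.Adj (xv k) w

/-- The set of indices `i` such that both `x_i` and `y_i` survive. -/
noncomputable def aliveF (S : Set (Vtx n)) : Finset (Fin n) :=
  @Finset.filter _ (fun i => xv i ∉ S ∧ yv i ∉ S) (Classical.decPred _) Finset.univ

lemma mem_aliveF {S : Set (Vtx n)} {i : Fin n} :
    i ∈ aliveF S ↔ xv i ∉ S ∧ yv i ∉ S := by
  simp [aliveF]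

lemma xv_ne_yv (i j : Fin n) : xv i ≠ yv j := by simp [xv, yv]

lemma baseVD (hyind : ∀ i j : Fin n, ¬ G.Adj (yv i) (yv j)) {S : Set (Vtx n)}
    (hInv : InvS G S) (hemp : aliveF S = ∅) : IsVD (indComplexAvoid G S) := by
  classical
  have hnadj : ∀ u v : Vtx n, u ∉ S → v ∉ S → ¬ G.Adj u v := by
    have key : ∀ (k : Fin n) (v : Vtx n), xv k ∉ S → v ∉ S → ¬ G.Adj (xv k) v := by
      intro k v hu hv
      have hyk : yv k ∈ S := by
        by_contra h
        have : k ∈ aliveF S := mem_aliveF.mpr ⟨hu, h⟩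
        rw [hemp] at this
        exact absurd this (Finset.notMem_empty _)
      exact hInv k hyk hu v hv
    intro u v hu hv hadj
    cases u with
    | inl k => exact key k v hu hv hadj
    | inr k =>
      cases v with
      | inl m => exact key m (yv k) hv hu hadj.symm
      | inr m => exact hyind k m hadj
  have hEq : indComplexAvoid G S =
      {t : Finset (Vtx n) |
        t ⊆ @Finset.filter _ (fun v => v ∉ S) (Classical.decPred _) Finset.univ} := by
    ext s
    constructor
    · rintro ⟨h1, _⟩
      intro v hv
      exact (@Finset.mem_filter _ _ (Classical.decPred _) _ _).mpr ⟨Finset.mem_univ _, h1 v hv⟩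
    · intro hs
      have hmem : ∀ v ∈ s, v ∉ S := fun v hv => ((@Finset.mem_filter _ _ (Classical.decPred _) _ _).mp (hs hv)).2
      exact ⟨hmem, fun u hu v hv => hnadj u v (hmem u hu) (hmem v hv)⟩
  rw [hEq]
  exact IsVD.simplex _

lemma mainVD (hyind : ∀ i j : Fin n, ¬ G.Adj (yv i) (yv j))
    (hxy : ∀ i, G.Adj (xv i) (yv i))
    (hss : StarStarCond G) (h1 : CondI G) :
    ∀ (M : ℕ) (S : Set (Vtx n)), InvS G S → (aliveF S).card ≤ M →
      IsVD (indComplexAvoid G S) := by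
  intro M
  induction M with
  | zero =>
    intro S hInv hcard
    exact baseVD G hyind hInv (Finset.card_eq_zero.mp (Nat.le_zero.mp hcard))
  | succ M ih =>
    intro S hInv hcard
    by_cases hW : aliveF S = ∅
    · exact baseVD G hyind hInv hW
    have hne : (aliveF S).Nonempty := Finset.nonempty_iff_ne_empty.mpr hW
    set i := (aliveF S).min' hne with hidef
    have hiA : i ∈ aliveF S := Finset.min'_mem _ _
    obtain ⟨hxi, hyi⟩ := mem_aliveF.mp hiA
    have hmin : ∀ k ∈ aliveF S, i ≤ k := fun k hk => Finset.min'_le _ _ hk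
    -- y_i is pendant among surviving vertices, with unique neighbor x_i
    have hpend : ∀ w, w ∉ S → G.Adj (yv i) w → w = xv i := by
      intro w hw hadj
      cases w with
      | inr m => exact absurd hadj (hyind i m)
      | inl k =>
        have hk : G.Adj (xv k) (yv i) := hadj.symm
        have hki : k ≤ i := hss k i hk
        by_cases hik : k = i
        · exact congrArg Sum.inl hik
        · have hkA : k ∉ aliveF S := fun h => hik (le_antisymm hki (hmin k h))
          have hyk : yv k ∈ S := by
            by_contra h
            exact hkA (mem_aliveF.mpr ⟨hw, h⟩)
          exact absurd hk (hInv k hyk hw (yv i) hyi)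
    apply IsVD.step (indComplexAvoid G S) (xv i)
    · -- the link: delete the closed neighborhood of x_i
      set Ncl : Set (Vtx n) := {w | w = xv i ∨ G.Adj (xv i) w} with hNcl
      have hEq : linkC (indComplexAvoid G S) (xv i) = indComplexAvoid G (S ∪ Ncl) := by
        ext s
        constructor
        · rintro ⟨hxs, havoid, hindep⟩
          refine ⟨?_, ?_⟩
          · intro v hv
            rintro (hvS | hvN)
            · exact havoid v (Finset.mem_insert_of_mem hv) hvS
            · rcases hvN with rfl | hadj
              · exact hxs hv
              · exact hindep (xv i) (Finset.mem_insert_self _ _)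
                  v (Finset.mem_insert_of_mem hv) hadj
          · intro u hu v hv
            exact hindep u (Finset.mem_insert_of_mem hu) v (Finset.mem_insert_of_mem hv)
        · rintro ⟨havoid, hindep⟩
          have hxs : xv i ∉ s := fun h => havoid _ h (Or.inr (Or.inl rfl))
          refine ⟨hxs, ?_, ?_⟩
          · intro v hv
            rcases Finset.mem_insert.mp hv with rfl | hv
            · exact hxi
            · exact fun hvS => havoid v hv (Or.inl hvS)
          · intro u hu v hv hadj
            rcases Finset.mem_insert.mp hu with rfl | hu
            · rcases Finset.mem_insert.mp hv with rfl | hv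
              · exact G.irrefl hadj
              · exact havoid v hv (Or.inr (Or.inr hadj))
            · rcases Finset.mem_insert.mp hv with rfl | hv
              · exact havoid u hu (Or.inr (Or.inr hadj.symm))
              · exact hindep u hu v hv hadj
      rw [hEq]
      apply ih
      · -- invariant is preserved
        intro k hyk hxk w hw hadj
        have hxkS : xv k ∉ S := fun h => hxk (Or.inl h)
        have hwS : w ∉ S := fun h => hw (Or.inl h)
        rcases hyk with hyk | hyk
        · exact hInv k hyk hxkS w hwS hadj
        · rcases hyk with hyk | hik
          · exact absurd hyk.symm (xv_ne_yv i k)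
          · -- y_k was deleted because x_i ~ y_k; use condition (i)
            have hki : k ≠ i := fun e => hxk (Or.inr (Or.inl (congrArg Sum.inl e)))
            cases w with
            | inl j =>
              have hji : j ≠ i := fun e => hw (Or.inr (Or.inl (congrArg Sum.inl e)))
              have hjk : j ≠ k := by
                rintro rfl
                exact G.irrefl hadj
              have := h1 j k i hjk hki hji (xv j) (Or.inl rfl) hadj.symm hik.symm
              exact hw (Or.inr (Or.inr this.symm))
            | inr m =>
              have hmi : m ≠ i := fun e => hw (Or.inr (Or.inr (e ▸ hxy i)))
              have hmk : m ≠ k := by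
                rintro rfl
                exact hw (Or.inr (Or.inr hik))
              have := h1 m k i hmk hki hmi (yv m) (Or.inr rfl) hadj.symm hik.symm
              exact hw (Or.inr (Or.inr this.symm))
      · -- the number of alive pairs strictly decreases
        have hsub : aliveF (S ∪ Ncl) ⊆ (aliveF S).erase i := by
          intro j hj
          obtain ⟨hx, hy⟩ := mem_aliveF.mp hj
          refine Finset.mem_erase.mpr ⟨?_, mem_aliveF.mpr
            ⟨fun h => hx (Or.inl h), fun h => hy (Or.inl h)⟩⟩
          rintro rfl
          exact hx (Or.inr (Or.inl rfl))
        have h2 := Finset.card_le_card hsub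
        have h3 := Finset.card_erase_of_mem hiA
        omega
    · -- the deletion: delete x_i alone
      have hEq : delC (indComplexAvoid G S) (xv i) = indComplexAvoid G (S ∪ {xv i}) := by
        ext s
        constructor
        · rintro ⟨hxs, havoid, hindep⟩
          refine ⟨?_, hindep⟩
          intro v hv
          rintro (hvS | hvI)
          · exact havoid v hv hvS
          · rw [Set.mem_singleton_iff] at hvI
            exact hxs (hvI ▸ hv)
        · rintro ⟨havoid, hindep⟩
          refine ⟨fun h => havoid _ h (Or.inr rfl), fun v hv h => havoid v hv (Or.inl h), hindep⟩
      rw [hEq]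
      apply ih
      · intro k hyk hxk w hw hadj
        have hyk' : yv k ∈ S := by
          rcases hyk with h | h
          · exact h
          · exact absurd h.symm (xv_ne_yv i k)
        exact hInv k hyk' (fun h => hxk (Or.inl h)) w (fun h => hw (Or.inl h)) hadj
      · have hsub : aliveF (S ∪ {xv i}) ⊆ (aliveF S).erase i := by
          intro j hj
          obtain ⟨hx, hy⟩ := mem_aliveF.mp hj
          refine Finset.mem_erase.mpr ⟨?_, mem_aliveF.mpr
            ⟨fun h => hx (Or.inl h), fun h => hy (Or.inl h)⟩⟩
          rintro rfl
          exact hx (Or.inr rfl)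
        have h2 := Finset.card_le_card hsub
        have h3 := Finset.card_erase_of_mem hiA
        omega
    · -- every facet of the deletion is a facet
      rintro s ⟨⟨hxs, havoid, hindep⟩, hmax⟩
      have hys : yv i ∈ s := by
        by_contra hys
        have hins : insert (yv i) s ∈ delC (indComplexAvoid G S) (xv i) := by
          refine ⟨?_, ?_, ?_⟩
          · intro h
            rcases Finset.mem_insert.mp h with h | h
            · exact xv_ne_yv i i h
            · exact hxs h
          · intro v hv
            rcases Finset.mem_insert.mp hv with rfl | hv
            · exact hyi
            · exact havoid v hv
          · intro u hu v hv hadj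
            rcases Finset.mem_insert.mp hu with rfl | hu
            · rcases Finset.mem_insert.mp hv with rfl | hv
              · exact G.irrefl hadj
              · exact hxs ((hpend v (havoid v hv) hadj) ▸ hv)
            · rcases Finset.mem_insert.mp hv with rfl | hv
              · exact hxs ((hpend u (havoid u hu) hadj.symm) ▸ hu)
              · exact hindep u hu v hv hadj
        have := hmax _ hins (Finset.subset_insert _ _)
        exact hys (this ▸ Finset.mem_insert_self _ _)
      refine ⟨⟨havoid, hindep⟩, ?_⟩
      intro t ht hsubt
      have hxt : xv i ∉ t := fun hxt => ht.2 (xv i) hxt (yv i) (hsubt hys) (hxy i)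
      exact hmax t ⟨hxt, ht⟩ hsubt

end VDAux

/-- Theorem 3.1, (1) ⇒ (3). A Cohen-Macaulay very well-covered graph
with `2n` vertices, i.e. one satisfying (∗), (∗∗), (i) and (ii), has a vertex
decomposable independence complex. -/
theorem CM_implies_vertexDecomposable {n : ℕ} (G : SimpleGraph (Vtx n))
    (hiso : NoIsolated G) (hht : HeightN G) (hstar : StarCond G)
    (hss : StarStarCond G) (h1 : CondI G) (h2 : CondII G) :
    IsVD (indComplex G) := by
  classical
  have hyind : ∀ i j : Fin n, ¬ G.Adj (yv i) (yv j) :=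
    fun i j h => hstar.2.1.1 (yv i) ⟨i, rfl⟩ (yv j) ⟨j, rfl⟩ h
  have hxy : ∀ i, G.Adj (xv i) (yv i) := hstar.2.2
  have h0 : indComplex G = indComplexAvoid G ∅ := by
    ext s
    exact ⟨fun h => ⟨fun v _ hv => hv, h⟩, fun h => h.2⟩
  rw [h0]
  exact VDAux.mainVD G hyind hxy hss h1 (VDAux.aliveF ∅).card ∅
    (fun k hk => absurd hk (Set.notMem_empty _)) le_rfl
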